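/- arXiv:1008.1237 — 3 statements merged into one kernel-verified Lean document; each statement's English description precedes it below -/
import Mathlib

section
/- Let P_N(r) be a radial kernel on H^3 satisfying |P_N(r)| ≤ C N^3 (1+Nr)^{-5} e^{-4r} for all r ≥ 0 and N ≥ 1. Then for any R ≥ 0, N ≥ 1 and p ∈ [1,2], the quantity A_{N,R,p} := ( ∫_{r ≥ R/N} |P_N(r)|^p (sinh r)^2 dr )^{1/p} satisfies A_{N,R,p} ≤ C' N^{3−3/p} (1+R)^{-1}, with C' depending only on C and p. -/
open MeasureTheory Real Filter

/-- Pointwise bound: `sinh r ≤ r * exp r` for `r ≥ 0`. -/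
lemma sinh_le_mul_exp {r : ℝ} (hr : 0 ≤ r) : Real.sinh r ≤ r * Real.exp r := by
  rw [Real.sinh_eq]
  have h1 : (-(2*r)) + 1 ≤ Real.exp (-(2*r)) := Real.add_one_le_exp _
  have h2 : Real.exp (-(2*r)) * Real.exp r = Real.exp (-r) := by
    rw [← Real.exp_add]; ring_nf
  have h3 : (0:ℝ) < Real.exp r := Real.exp_pos r
  nlinarith [Real.exp_pos (-(2*r))]

set_option maxHeartbeats 1000000 in
/-- If a radial kernel on `H³` satisfies `|P_N(r)| ≤ C N³ (1+Nr)^{-5} e^{-4r}`, then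
for `R ≥ 0`, `N ≥ 1`, `p ∈ [1,2]`, the quantity
`A_{N,R,p} = (∫_{r ≥ R/N} |P_N(r)|^p (sinh r)² dr)^{1/p}` is at most
`C' N^{3-3/p} (1+R)^{-1}`, with `C'` depending only on `C` and `p`. -/
theorem stmt4 (C : ℝ) (p : ℝ) (hp1 : 1 ≤ p) (hp2 : p ≤ 2) :
    ∃ C' : ℝ, ∀ P : ℝ → ℝ → ℝ,
      (∀ N r : ℝ, 1 ≤ N → 0 ≤ r →
        |P N r| ≤ C * N ^ 3 * ((1 + N * r) ^ 5)⁻¹ * Real.exp (-4 * r)) →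
      ∀ N R : ℝ, 1 ≤ N → 0 ≤ R →
        (∫ r in Set.Ici (R / N), |P N r| ^ p * Real.sinh r ^ 2) ^ (1 / p)
          ≤ C' * N ^ (3 - 3 / p) * (1 + R)⁻¹ := by
  have hp0 : (0:ℝ) < p := lt_of_lt_of_le one_pos hp1
  set M : ℝ := |C| ^ p / (5 * p - 3) with hM
  have h5p3 : (0:ℝ) < 5 * p - 3 := by linarith
  have hMnn : 0 ≤ M := div_nonneg (Real.rpow_nonneg (abs_nonneg C) p) h5p3.le
  refine ⟨M ^ (1/p), ?_⟩
  intro P hP N R hN hR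
  have hN0 : (0:ℝ) < N := lt_of_lt_of_le one_pos hN
  have ha : 0 ≤ R / N := div_nonneg hR hN0.le
  set a : ℝ := R / N with haa
  have hNa : N * a = R := by rw [haa]; field_simp [hN0.ne']
  set e : ℝ := 2 - 5 * p with he
  set b : ℝ := 3 - 5 * p with hb
  have hb1 : b < -1 := by rw [hb]; linarith
  have hbne : b ≠ 0 := by rw [hb]; intro h; linarith [h]
  set D : ℝ := |C| ^ p * N ^ (3 * p - 2) with hD
  have hDnn : 0 ≤ D :=
    mul_nonneg (Real.rpow_nonneg (abs_nonneg C) p) (Real.rpow_nonneg hN0.le _)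
  -- antiderivative for the dominating function
  set F : ℝ → ℝ := fun t => (1 + N * t) ^ b / (b * N) with hF
  have hpos : ∀ x : ℝ, x ∈ Set.Ici a → (0:ℝ) < 1 + N * x := by
    intro x hx
    have : 0 ≤ N * x := mul_nonneg hN0.le (le_trans ha hx)
    linarith
  have hderiv : ∀ x ∈ Set.Ici a, HasDerivAt F ((1 + N * x) ^ e) x := by
    intro x hx
    have hne : (1 + N * x) ≠ 0 := (hpos x hx).ne'
    have h1 : HasDerivAt (fun t : ℝ => 1 + N * t) N x := by
      simpa using ((hasDerivAt_id x).const_mul N).const_add 1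
    have h2 : HasDerivAt (fun t : ℝ => (1 + N * t) ^ b) (b * (1 + N * x) ^ (b - 1) * N) x := by
      exact (Real.hasDerivAt_rpow_const (Or.inl hne)).comp x h1
    have h3 := h2.div_const (b * N)
    refine h3.congr_deriv ?_
    have hbe : b - 1 = e := by rw [hb, he]; ring
    rw [hbe]
    field_simp
  have htend : Tendsto F atTop (nhds 0) := by
    have h1 : Tendsto (fun t : ℝ => 1 + N * t) atTop atTop :=
      tendsto_atTop_add_const_left _ 1 (tendsto_id.const_mul_atTop hN0)
    have h2 : Tendsto (fun y : ℝ => y ^ b) atTop (nhds 0) := by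
      have := tendsto_rpow_neg_atTop (y := -b) (by linarith)
      simpa using this
    have := (h2.comp h1).div_const (b * N)
    simpa [hF, zero_div] using this
  have hint : IntegrableOn (fun x => (1 + N * x) ^ e) (Set.Ioi a) := by
    refine integrableOn_Ioi_deriv_of_nonneg' hderiv (fun x hx => ?_) htend
    exact Real.rpow_nonneg (hpos x (Set.Ioi_subset_Ici_self hx)).le _
  have hval : (∫ x in Set.Ioi a, (1 + N * x) ^ e) = (1 + R) ^ b / ((5 * p - 3) * N) := by
    rw [integral_Ioi_of_hasDerivAt_of_tendsto' hderiv hint htend]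
    rw [hF]
    simp only [hNa]
    rw [zero_sub, hb]
    have h35 : (3:ℝ) - 5 * p ≠ 0 := (by linarith : (3:ℝ) - 5 * p < 0).ne
    field_simp
    ring
  -- pointwise bound
  have hpoint : ∀ x ∈ Set.Ici a, |P N x| ^ p * Real.sinh x ^ 2 ≤ D * (1 + N * x) ^ e := by
    intro x hx
    have hx0 : 0 ≤ x := le_trans ha hx
    have hu : (0:ℝ) < 1 + N * x := hpos x hx
    have hB := hP N x hN hx0
    have hB' : |P N x| ≤ |C| * N ^ 3 * ((1 + N * x) ^ 5)⁻¹ * Real.exp (-4 * x) := by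
      refine le_trans hB ?_
      have h1 : C ≤ |C| := le_abs_self C
      have h2 : (0:ℝ) ≤ N ^ 3 * ((1 + N * x) ^ 5)⁻¹ * Real.exp (-4 * x) := by positivity
      nlinarith
    have hBnn : (0:ℝ) ≤ |C| * N ^ 3 * ((1 + N * x) ^ 5)⁻¹ * Real.exp (-4 * x) := by positivity
    have h1 : |P N x| ^ p ≤ (|C| * N ^ 3 * ((1 + N * x) ^ 5)⁻¹ * Real.exp (-4 * x)) ^ p :=
      Real.rpow_le_rpow (abs_nonneg _) hB' hp0.le
    -- expand the rpow of the product
    have h2 : (|C| * N ^ 3 * ((1 + N * x) ^ 5)⁻¹ * Real.exp (-4 * x)) ^ p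
        = |C| ^ p * N ^ (3 * p) * (1 + N * x) ^ (-(5 * p)) * Real.exp (-4 * x * p) := by
      rw [Real.mul_rpow (by positivity) (Real.exp_pos _).le,
          Real.mul_rpow (by positivity) (by positivity),
          Real.mul_rpow (abs_nonneg C) (by positivity)]
      congr 1
      · congr 1
        · rw [← Real.rpow_natCast N 3, ← Real.rpow_mul hN0.le]
          norm_num
        · rw [← Real.rpow_natCast (1 + N * x) 5, ← Real.rpow_neg hu.le,
              ← Real.rpow_mul hu.le]
          congr 1
          push_cast
          ring
      · rw [← Real.exp_mul]
    have hsinh : Real.sinh x ^ 2 ≤ x ^ 2 * Real.exp (2 * x) := by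
      have h := sinh_le_mul_exp hx0
      have hs : 0 ≤ Real.sinh x := Real.sinh_nonneg_iff.mpr hx0
      have : Real.sinh x ^ 2 ≤ (x * Real.exp x) ^ 2 := by
        apply sq_le_sq' <;> nlinarith
      calc Real.sinh x ^ 2 ≤ (x * Real.exp x) ^ 2 := this
        _ = x ^ 2 * Real.exp (2 * x) := by
            rw [mul_pow, ← Real.exp_nat_mul]; norm_num [mul_comm]
    have hxsq : x ^ 2 ≤ (1 + N * x) ^ (2:ℝ) / N ^ (2:ℝ) := by
      rw [Real.rpow_two, Real.rpow_two, le_div_iff₀ (by positivity)]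
      nlinarith [mul_nonneg hN0.le hx0]
    have hexp : Real.exp (-4 * x * p) * Real.exp (2 * x) ≤ 1 := by
      rw [← Real.exp_add, Real.exp_le_one_iff]
      nlinarith
    calc |P N x| ^ p * Real.sinh x ^ 2
        ≤ (|C| ^ p * N ^ (3 * p) * (1 + N * x) ^ (-(5 * p)) * Real.exp (-4 * x * p))
            * (x ^ 2 * Real.exp (2 * x)) := by
          rw [h2] at h1
          apply mul_le_mul h1 hsinh (sq_nonneg _)
          positivity
      _ ≤ (|C| ^ p * N ^ (3 * p) * (1 + N * x) ^ (-(5 * p)))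
            * ((1 + N * x) ^ (2:ℝ) / N ^ (2:ℝ))
            * (Real.exp (-4 * x * p) * Real.exp (2 * x)) := by
          rw [mul_comm (x^2) (Real.exp (2*x))]
          have h3 : (0:ℝ) ≤ |C| ^ p * N ^ (3 * p) * (1 + N * x) ^ (-(5 * p)) := by positivity
          calc |C| ^ p * N ^ (3 * p) * (1 + N * x) ^ (-(5 * p)) * Real.exp (-4 * x * p)
                * (Real.exp (2 * x) * x ^ 2)
              = (|C| ^ p * N ^ (3 * p) * (1 + N * x) ^ (-(5 * p))) * x ^ 2
                * (Real.exp (-4 * x * p) * Real.exp (2 * x)) := by ring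
            _ ≤ _ := by
                apply mul_le_mul_of_nonneg_right _ (by positivity)
                exact mul_le_mul_of_nonneg_left hxsq h3
      _ ≤ (|C| ^ p * N ^ (3 * p) * (1 + N * x) ^ (-(5 * p)))
            * ((1 + N * x) ^ (2:ℝ) / N ^ (2:ℝ)) * 1 := by
          apply mul_le_mul_of_nonneg_left hexp (by positivity)
      _ = D * (1 + N * x) ^ e := by
          have eN : N ^ (3*p) * (N ^ (2:ℝ))⁻¹ = N ^ (3*p-2) := by
            rw [← Real.rpow_neg hN0.le, ← Real.rpow_add hN0]
            first | (congr 1 <;> ring) | rfl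
          have eu : (1 + N * x) ^ (-(5*p)) * (1 + N * x) ^ (2:ℝ) = (1 + N * x) ^ (2-5*p) := by
            rw [← Real.rpow_add hu]
            first | (congr 1 <;> ring) | rfl
          rw [mul_one, hD, he, div_eq_mul_inv]
          calc |C| ^ p * N ^ (3 * p) * (1 + N * x) ^ (-(5 * p))
                * ((1 + N * x) ^ (2:ℝ) * (N ^ (2:ℝ))⁻¹)
              = |C| ^ p * (N ^ (3*p) * (N ^ (2:ℝ))⁻¹)
                * ((1 + N * x) ^ (-(5*p)) * (1 + N * x) ^ (2:ℝ)) := by ring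
            _ = |C| ^ p * N ^ (3 * p - 2) * (1 + N * x) ^ (2 - 5 * p) := by rw [eN, eu]
  -- compare integrals
  set I : ℝ := ∫ r in Set.Ici a, |P N r| ^ p * Real.sinh r ^ 2 with hI
  have hInn : 0 ≤ I := by
    apply integral_nonneg
    intro r
    positivity
  have hIle : I ≤ D * ((1 + R) ^ b / ((5 * p - 3) * N)) := by
    have hgint : IntegrableOn (fun x => D * (1 + N * x) ^ e) (Set.Ioi a) := hint.const_mul D
    have : I = ∫ r in Set.Ioi a, |P N r| ^ p * Real.sinh r ^ 2 := integral_Ici_eq_integral_Ioi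
    rw [this]
    calc (∫ r in Set.Ioi a, |P N r| ^ p * Real.sinh r ^ 2)
        ≤ ∫ r in Set.Ioi a, D * (1 + N * r) ^ e := by
          apply integral_mono_of_nonneg
          · filter_upwards with r; positivity
          · exact hgint
          · filter_upwards [ae_restrict_mem measurableSet_Ioi] with r hr
            exact hpoint r (Set.Ioi_subset_Ici_self hr)
      _ = D * ((1 + R) ^ b / ((5 * p - 3) * N)) := by
          rw [integral_const_mul, hval]
  -- final arithmetic
  have hfinal : I ≤ M * N ^ (3 * p - 3) * (1 + R) ^ (-p) := by
    have hNdiv : N ^ (3 * p - 2) / N = N ^ (3 * p - 3) := by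
      rw [div_eq_mul_inv, ← Real.rpow_neg_one N, ← Real.rpow_add hN0]
      first | (congr 1 <;> ring) | rfl
    have h1 : D * ((1 + R) ^ b / ((5 * p - 3) * N))
        = M * N ^ (3 * p - 3) * (1 + R) ^ b := by
      rw [hD, hM, ← hNdiv]
      field_simp
    have h2 : (1 + R) ^ b ≤ (1 + R) ^ (-p) := by
      apply Real.rpow_le_rpow_of_exponent_le (by linarith)
      rw [hb]; linarith
    calc I ≤ D * ((1 + R) ^ b / ((5 * p - 3) * N)) := hIle
      _ = M * N ^ (3 * p - 3) * (1 + R) ^ b := h1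
      _ ≤ M * N ^ (3 * p - 3) * (1 + R) ^ (-p) := by
          apply mul_le_mul_of_nonneg_left h2
          positivity
  have hR1 : (0:ℝ) < 1 + R := by linarith
  calc I ^ (1/p) ≤ (M * N ^ (3 * p - 3) * (1 + R) ^ (-p)) ^ (1/p) :=
        Real.rpow_le_rpow hInn hfinal (by positivity)
    _ = M ^ (1/p) * N ^ (3 - 3/p) * (1 + R)⁻¹ := by
        rw [Real.mul_rpow (by positivity) (by positivity),
            Real.mul_rpow hMnn (by positivity),
            ← Real.rpow_mul hN0.le, ← Real.rpow_mul hR1.le]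
        have e1 : (3 * p - 3) * (1/p) = 3 - 3/p := by field_simp
        have e2 : -p * (1/p) = -1 := by field_simp
        rw [e1, e2, Real.rpow_neg_one]
end

section
/- Let ã'(y) = (y^2 − 1 + N^{-2})^{-1/2} for N ≥ 1 and a(x) = ã(cosh r), r = d(0,x), on H^3. For any tangent vector X at a point with radial coordinate r, the Hessian satisfies X^α X^β D_α D_β a ≥ N^{-2} cosh r ((cosh r)^2 − 1 + N^{-2})^{-3/2} |X|^2. In particular the Hessian of a is positive definite, and X^α X_α · N 1_{B(0, 1/N)} ≤ C X^α X^β D_α D_β a for an absolute constant C. -/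
open Real

set_option maxHeartbeats 1600000

/-- Hessian bound for `a = ã(cosh r)` on `H³` with `ã'(y) = (y²-1+N⁻²)^{-1/2}`
(so `ã''(y) = -y (y²-1+N⁻²)^{-3/2}`).  In an orthonormal frame,
`X^α X^β D_α D_β a = cosh r ã'(cosh r) |X|² + ã''(cosh r) (X·∇cosh r)²` with
`|∇cosh r|² = cosh²r - 1` (so `(X·∇cosh r)² ≤ |X|² (cosh²r - 1)` by Cauchy–Schwarz).
The Hessian is bounded below by `N⁻² cosh r (cosh²r - 1 + N⁻²)^{-3/2} |X|²`, so it is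
positive definite, and `N |X|² 1_{B(0,1/N)} ≤ C X^α X^β D_α D_β a` for an absolute
constant `C`. -/
theorem stmt9 :
    ∃ C : ℝ, 0 < C ∧ ∀ N : ℝ, 1 ≤ N → ∀ r : ℝ, 0 ≤ r →
      ∀ XnormSq Xdot : ℝ, 0 ≤ XnormSq →
        Xdot ^ 2 ≤ XnormSq * (Real.cosh r ^ 2 - 1) →
        ((N⁻¹) ^ 2 * Real.cosh r *
              ((Real.cosh r ^ 2 - 1 + (N⁻¹) ^ 2) ^ (-(3 : ℝ) / 2)) * XnormSq
            ≤ Real.cosh r * ((Real.cosh r ^ 2 - 1 + (N⁻¹) ^ 2) ^ (-(1 : ℝ) / 2)) * XnormSq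
              + (-(Real.cosh r) * ((Real.cosh r ^ 2 - 1 + (N⁻¹) ^ 2) ^ (-(3 : ℝ) / 2)))
                * Xdot ^ 2) ∧
        ((if r < 1 / N then N * XnormSq else 0)
            ≤ C * (Real.cosh r * ((Real.cosh r ^ 2 - 1 + (N⁻¹) ^ 2) ^ (-(1 : ℝ) / 2))
                * XnormSq
              + (-(Real.cosh r) * ((Real.cosh r ^ 2 - 1 + (N⁻¹) ^ 2) ^ (-(3 : ℝ) / 2)))
                * Xdot ^ 2)) := by
  refine ⟨12, by norm_num, ?_⟩
  intro N hN r hr XnormSq Xdot hX hCS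
  have hN0 : (0:ℝ) < N := lt_of_lt_of_le one_pos hN
  set c := Real.cosh r with hc_def
  have hc : 1 ≤ c := Real.one_le_cosh r
  have hc0 : 0 < c := lt_of_lt_of_le one_pos hc
  have hε : (0:ℝ) < (N⁻¹) ^ 2 := by positivity
  set ε := (N⁻¹) ^ 2 with hε_def
  have hD : 0 < c ^ 2 - 1 + ε := by nlinarith
  set D := c ^ 2 - 1 + ε with hD_def
  have hP : 0 < D ^ (-(3:ℝ)/2) := Real.rpow_pos_of_pos hD _
  have hsplit : D ^ (-(1:ℝ)/2) = D * D ^ (-(3:ℝ)/2) := by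
    rw [show (-(1:ℝ)/2) = 1 + (-(3:ℝ)/2) by norm_num, Real.rpow_add hD, Real.rpow_one]
  have key : ε * c * D ^ (-(3:ℝ)/2) * XnormSq
      ≤ c * D ^ (-(1:ℝ)/2) * XnormSq + (-c * D ^ (-(3:ℝ)/2)) * Xdot ^ 2 := by
    rw [hsplit]
    have h1 : 0 ≤ XnormSq * (c ^ 2 - 1) - Xdot ^ 2 := by linarith
    have h2 : 0 ≤ c * D ^ (-(3:ℝ)/2) * (XnormSq * (c ^ 2 - 1) - Xdot ^ 2) :=
      mul_nonneg (mul_nonneg hc0.le hP.le) h1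
    nlinarith [h2]
  refine ⟨key, ?_⟩
  by_cases hrN : r < 1 / N
  · rw [if_pos hrN]
    have hr1 : r ≤ 1 := le_trans hrN.le (by rw [div_le_one hN0]; exact hN)
    have hr3 : 0 ≤ r * r * (1 - r) := mul_nonneg (mul_nonneg hr hr) (by linarith)
    have hexp : Real.exp r ≤ 1 + r + r ^ 2 := by
      calc Real.exp r ≤ _ := Real.exp_bound' hr hr1 zero_lt_three
        _ ≤ 1 + r + r ^ 2 := by
          have h3 : (∑ m ∈ Finset.range 3, r ^ m / (Nat.factorial m : ℝ))
              = 1 + r + r ^ 2 / 2 := by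
            show (∑ m ∈ Finset.range (2+1), r ^ m / (Nat.factorial m : ℝ)) = _
            rw [Finset.sum_range_succ]
            show (∑ m ∈ Finset.range (1+1), r ^ m / (Nat.factorial m : ℝ)) + _ = _
            rw [Finset.sum_range_succ, Finset.sum_range_one]
            norm_num [Nat.factorial]
          rw [h3]
          norm_num [Nat.factorial]
          nlinarith [hr3]
    have hexpneg : 1 - r ≤ Real.exp (-r) := by
      have := Real.add_one_le_exp (-r); linarith
    have hsinh : Real.sinh r ≤ (3/2) * r := by
      rw [Real.sinh_eq]; nlinarith [hexp, hexpneg]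
    have hsinh0 : 0 ≤ Real.sinh r := by
      have h := Real.sinh_le_sinh.2 hr
      simpa using h
    have hsq : c ^ 2 - 1 ≤ 4 * r ^ 2 := by
      have hs2 := Real.sinh_sq r
      rw [← hc_def] at hs2
      nlinarith [hsinh, hsinh0, hr]
    have hrε : r ^ 2 ≤ ε := by
      rw [hε_def]
      simpa [one_div] using pow_le_pow_left₀ hr hrN.le 2
    have hDle : D ≤ 5 * ε := by rw [hD_def]; linarith
    have h5ε : (0:ℝ) < 5 * ε := by positivity
    have hPge : (5 * ε) ^ (-(3:ℝ)/2) ≤ D ^ (-(3:ℝ)/2) :=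
      Real.rpow_le_rpow_of_nonpos hD hDle (by norm_num)
    have hbase : ε = N ^ (-2:ℝ) := by
      rw [hε_def, show (-2:ℝ) = ((-2:ℤ):ℝ) by norm_num, Real.rpow_intCast, zpow_neg,
        show ((2:ℤ)) = ((2:ℕ):ℤ) from rfl, zpow_natCast, ← inv_pow]
    have hval : (5 * ε) ^ (-(3:ℝ)/2) = (5:ℝ) ^ (-(3:ℝ)/2) * N ^ 3 := by
      rw [hbase, Real.mul_rpow (by norm_num) (Real.rpow_nonneg hN0.le _)]
      congr 1
      rw [← Real.rpow_mul hN0.le]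
      norm_num
    have h5pos : (0:ℝ) < (5:ℝ) ^ (-(3:ℝ)/2) := Real.rpow_pos_of_pos (by norm_num) _
    have h5sq : ((5:ℝ) ^ (-(3:ℝ)/2)) ^ 2 = (125:ℝ)⁻¹ := by
      rw [← Real.rpow_natCast ((5:ℝ) ^ (-(3:ℝ)/2)) 2, ← Real.rpow_mul (by norm_num : (0:ℝ) ≤ 5)]
      norm_num
    have h5 : (1:ℝ)/12 ≤ (5:ℝ) ^ (-(3:ℝ)/2) := by nlinarith [h5pos, h5sq]
    have hPge2 : N ^ 3 / 12 ≤ D ^ (-(3:ℝ)/2) := by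
      have : N ^ 3 / 12 ≤ (5:ℝ) ^ (-(3:ℝ)/2) * N ^ 3 := by
        have := mul_le_mul_of_nonneg_right h5 (pow_pos hN0 3).le
        linarith
      rw [← hval] at this
      exact le_trans this hPge
    have hNne : N ≠ 0 := hN0.ne'
    have heq : ε * (N ^ 3 / 12) = N / 12 := by
      rw [hε_def]
      field_simp
    have h3 : N / 12 ≤ ε * c * D ^ (-(3:ℝ)/2) := by
      have h1 : ε * (N ^ 3 / 12) ≤ ε * D ^ (-(3:ℝ)/2) :=
        mul_le_mul_of_nonneg_left hPge2 hε.le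
      have h2 : ε * D ^ (-(3:ℝ)/2) ≤ ε * c * D ^ (-(3:ℝ)/2) := by
        nlinarith [mul_pos hε hP, hc]
      calc N / 12 = ε * (N ^ 3 / 12) := heq.symm
        _ ≤ ε * D ^ (-(3:ℝ)/2) := h1
        _ ≤ _ := h2
    have hmain : N * XnormSq ≤ 12 * (ε * c * D ^ (-(3:ℝ)/2) * XnormSq) := by
      have := mul_le_mul_of_nonneg_right h3 hX
      linarith
    calc N * XnormSq ≤ 12 * (ε * c * D ^ (-(3:ℝ)/2) * XnormSq) := hmain
      _ ≤ 12 * (c * D ^ (-(1:ℝ)/2) * XnormSq + (-c * D ^ (-(3:ℝ)/2)) * Xdot ^ 2) := by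
          linarith [key]
  · rw [if_neg hrN]
    have h0 : 0 ≤ ε * c * D ^ (-(3:ℝ)/2) * XnormSq := by positivity
    linarith [key, h0]
end

section
/- Let E^1(u) = (1/2)∫_{H^3}|∇_g u|^2 dμ + (1/6)∫_{H^3}|u|^6 dμ. Suppose f_k = Σ_{α=1}^{J} F^α_k + r^J_k in H^1(H^3) where (a) the gradient terms satisfy ‖∇_g f_k‖^2_{L^2} = Σ_α ‖∇_g F^α_k‖^2_{L^2} + ‖∇_g r^J_k‖^2_{L^2} + o_k(1), (b) ‖F^α_k F^β_k‖_{L^3} → 0 as k → ∞ for all α ≠ β, (c) the F^α_k are bounded in L^6 uniformly, and (d) ‖r^J_k‖_{L^6} → 0 as k → ∞. Then |E^1(f_k) − Σ_{α=1}^J E^1(F^α_k) − E^1(r^J_k)| → 0 as k → ∞. -/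
open MeasureTheory Real Filter

noncomputable section

/-- Minkowski bilinear form on `ℝ⁴`, `[x,y] = x⁰y⁰ - x¹y¹ - x²y² - x³y³`. -/
def Mink (x y : Fin 4 → ℝ) : ℝ :=
  x 0 * y 0 - x 1 * y 1 - x 2 * y 2 - x 3 * y 3

/-- The hyperboloid model of hyperbolic 3-space. -/
def Hyp3 : Type := {x : Fin 4 → ℝ // Mink x x = 1 ∧ 0 < x 0}

/-- Inverse hyperbolic cosine. -/
def arcosh (x : ℝ) : ℝ := Real.log (x + Real.sqrt (x ^ 2 - 1))

/-- The global chart `Ψ_I(v) = (√(1+|v|²), v)` of `H³`, as a map into `ℝ⁴`. -/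
def psiI (v : EuclideanSpace ℝ (Fin 3)) : Fin 4 → ℝ :=
  ![Real.sqrt (1 + ‖v‖ ^ 2), v 0, v 1, v 2]

lemma psiI_mem (v : EuclideanSpace ℝ (Fin 3)) :
    Mink (psiI v) (psiI v) = 1 ∧ 0 < psiI v 0 := by
  have h : Real.sqrt (1 + ‖v‖ ^ 2) ^ 2 = 1 + ‖v‖ ^ 2 := Real.sq_sqrt (by positivity)
  have hn : ‖v‖ ^ 2 = v 0 ^ 2 + v 1 ^ 2 + v 2 ^ 2 := by
    rw [EuclideanSpace.norm_eq, Real.sq_sqrt (by positivity)]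
    simp [Fin.sum_univ_three, sq_abs]
  constructor
  · simp only [Mink, psiI, Matrix.cons_val_zero, Matrix.cons_val_one, Matrix.head_cons,
      Matrix.cons_val_two, Matrix.tail_cons, Matrix.cons_val_three]
    nlinarith [h, hn]
  · simp only [psiI, Matrix.cons_val_zero]
    positivity

/-- The chart `Ψ_I` as a map into `H³`. -/
def psiH (v : EuclideanSpace ℝ (Fin 3)) : Hyp3 := ⟨psiI v, psiI_mem v⟩

/-- The origin `0 = (1,0,0,0)` of `H³`. -/
def originH : Hyp3 :=
  ⟨![1, 0, 0, 0], by
    constructor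
    · simp [Mink]
    · norm_num⟩



open scoped ENNReal

section Aux



lemma real2 {x y z : ℝ} (hx : 0 ≤ x) (hy : 0 ≤ y) (hz : 0 ≤ z)
    (h1 : z ≤ x + y) (h2 : x - y ≤ z) (h3 : y - x ≤ z) :
    |z^6 - x^6 - y^6| ≤ 62*(x^5*y + x*y^5) := by
  have hu : z^6 ≤ (x+y)^6 := pow_le_pow_left₀ hz h1 6
  have hl : (x-y)^6 ≤ z^6 := by
    have habs : |x - y| ≤ z := abs_le.mpr ⟨by linarith, by linarith⟩
    calc (x-y)^6 = |x-y|^6 := by rw [← abs_pow, abs_of_nonneg (by positivity)]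
    _ ≤ z^6 := pow_le_pow_left₀ (abs_nonneg _) habs 6
  rw [abs_le]
  constructor
  · nlinarith [mul_nonneg hx hy, sq_nonneg (x-y), sq_nonneg (x+y), sq_nonneg (x*y),
      mul_nonneg (mul_nonneg hx hy) (sq_nonneg (x-y)), mul_nonneg (mul_nonneg hx hy) (sq_nonneg (x+y))]
  · nlinarith [mul_nonneg hx hy, sq_nonneg (x-y), sq_nonneg (x+y), sq_nonneg (x*y),
      mul_nonneg (mul_nonneg hx hy) (sq_nonneg (x-y)), mul_nonneg (mul_nonneg hx hy) (sq_nonneg (x+y)),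
      mul_nonneg (mul_nonneg (mul_nonneg hx hx) hy) hy, sq_nonneg (x^2-y^2)]

lemma cplx2 (a b : ℂ) : |‖a+b‖^6 - ‖a‖^6 - ‖b‖^6| ≤ 62*(‖a‖^5*‖b‖ + ‖a‖*‖b‖^5) := by
  have h := abs_norm_sub_norm_le (a+b) b
  simp only [add_sub_cancel_right] at h
  rw [abs_le] at h
  have h' := abs_norm_sub_norm_le (a+b) a
  simp only [add_sub_cancel_left] at h'
  rw [abs_le] at h'
  exact real2 (norm_nonneg a) (norm_nonneg b) (norm_nonneg (a+b)) (norm_add_le a b)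
    (by linarith [h'.1]) (by linarith [h.1])

lemma multi {ι : Type*} [DecidableEq ι] (s : Finset ι) :
    ∃ C : ℝ, 0 ≤ C ∧ ∀ (a : ι → ℂ),
      |‖∑ i ∈ s, a i‖^6 - ∑ i ∈ s, ‖a i‖^6| ≤
        C * ∑ i ∈ s, ∑ j ∈ s.erase i, ‖a i‖ * ‖a j‖^5 := by
  induction s using Finset.induction_on with
  | empty => exact ⟨0, le_refl _, fun a => by simp⟩
  | @insert i s hi IH =>
    obtain ⟨C, hC0, hC⟩ := IH
    refine ⟨62 * (1 + (s.card : ℝ)^4) + C, by positivity, fun a => ?_⟩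
    set x := ‖a i‖ with hx
    set b := ∑ j ∈ s, a j with hb
    -- the new pair sum
    set T := ∑ i' ∈ insert i s, ∑ j ∈ (insert i s).erase i', ‖a i'‖ * ‖a j‖^5 with hT
    set Ts := ∑ i' ∈ s, ∑ j ∈ s.erase i', ‖a i'‖ * ‖a j‖^5 with hTs
    have hTsplit : T = (∑ j ∈ s, x * ‖a j‖^5) + (∑ j ∈ s, ‖a j‖ * x^5 + Ts) := by
      rw [hT, Finset.sum_insert hi]
      congr 1
      · rw [Finset.erase_insert hi]
      · rw [← Finset.sum_add_distrib]
        refine Finset.sum_congr rfl fun j hj => ?_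
        have : (insert i s).erase j = insert i (s.erase j) := by
          rw [Finset.erase_insert_of_ne (by rintro rfl; exact hi hj)]
        rw [this, Finset.sum_insert (by simp [hi, Finset.mem_erase])]
    have hTs_nonneg : 0 ≤ Ts := Finset.sum_nonneg fun _ _ => Finset.sum_nonneg fun _ _ => by positivity
    have hS1_nonneg : 0 ≤ ∑ j ∈ s, x * ‖a j‖^5 := Finset.sum_nonneg fun _ _ => by positivity
    have hS2_nonneg : 0 ≤ ∑ j ∈ s, ‖a j‖ * x^5 := Finset.sum_nonneg fun _ _ => by positivity
    -- bounds on b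
    have hbnorm : ‖b‖ ≤ ∑ j ∈ s, ‖a j‖ := norm_sum_le _ _
    have hb5 : ‖b‖^5 ≤ (s.card : ℝ)^4 * ∑ j ∈ s, ‖a j‖^5 := by
      have h1 : ‖b‖^5 ≤ (∑ j ∈ s, ‖a j‖)^5 := pow_le_pow_left₀ (norm_nonneg _) hbnorm 5
      have h2 := pow_sum_div_card_le_sum_pow (f := fun j => ‖a j‖) (s := s)
        (fun _ _ => norm_nonneg _) 4
      rcases Finset.eq_empty_or_nonempty s with rfl | hs
      · simp at h1 ⊢; exact h1
      · have hc : (0:ℝ) < (s.card : ℝ)^4 := by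
          have := Finset.card_pos.mpr hs; positivity
        rw [div_le_iff₀ hc] at h2
        calc ‖b‖^5 ≤ (∑ j ∈ s, ‖a j‖)^5 := h1
          _ ≤ (∑ j ∈ s, ‖a j‖^5) * (s.card : ℝ)^4 := h2
          _ = (s.card : ℝ)^4 * ∑ j ∈ s, ‖a j‖^5 := by ring
    -- main estimate
    have key := cplx2 (a i) b
    have hIH := hC a
    rw [Finset.sum_insert hi, Finset.sum_insert hi]
    have tri : |‖a i + b‖^6 - (x^6 + ∑ j ∈ s, ‖a j‖^6)|
        ≤ |‖a i + b‖^6 - x^6 - ‖b‖^6| + |‖b‖^6 - ∑ j ∈ s, ‖a j‖^6| := by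
      have : ‖a i + b‖^6 - (x^6 + ∑ j ∈ s, ‖a j‖^6)
          = (‖a i + b‖^6 - x^6 - ‖b‖^6) + (‖b‖^6 - ∑ j ∈ s, ‖a j‖^6) := by ring
      rw [this]; exact abs_add_le _ _
    have e1 : x^5 * ‖b‖ ≤ ∑ j ∈ s, ‖a j‖ * x^5 := by
      calc x^5 * ‖b‖ ≤ x^5 * ∑ j ∈ s, ‖a j‖ := by
            apply mul_le_mul_of_nonneg_left hbnorm (by positivity)
        _ = ∑ j ∈ s, ‖a j‖ * x^5 := by rw [Finset.mul_sum]; exact Finset.sum_congr rfl fun _ _ => by ring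
    have e2 : x * ‖b‖^5 ≤ (s.card : ℝ)^4 * ∑ j ∈ s, x * ‖a j‖^5 := by
      calc x * ‖b‖^5 ≤ x * ((s.card : ℝ)^4 * ∑ j ∈ s, ‖a j‖^5) := by
            apply mul_le_mul_of_nonneg_left hb5 (by positivity)
        _ = (s.card : ℝ)^4 * ∑ j ∈ s, x * ‖a j‖^5 := by
            rw [Finset.mul_sum, Finset.mul_sum, Finset.mul_sum]
            rw [← Finset.sum_congr rfl fun j _ => rfl]
            ring_nf
    calc |‖a i + b‖^6 - (x^6 + ∑ j ∈ s, ‖a j‖^6)|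
        ≤ |‖a i + b‖^6 - x^6 - ‖b‖^6| + |‖b‖^6 - ∑ j ∈ s, ‖a j‖^6| := tri
      _ ≤ 62*(x^5*‖b‖ + x*‖b‖^5) + C * Ts := add_le_add key hIH
      _ ≤ 62*((∑ j ∈ s, ‖a j‖ * x^5) + (s.card:ℝ)^4 * ∑ j ∈ s, x * ‖a j‖^5) + C * T := by
          have hTge : Ts ≤ T := by rw [hTsplit]; linarith
          have := mul_le_mul_of_nonneg_left hTge hC0
          have h62 := add_le_add e1 e2
          nlinarith
      _ ≤ (62 * (1 + (s.card : ℝ)^4) + C) * T := by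
          have hTge1 : ∑ j ∈ s, ‖a j‖ * x^5 ≤ T := by rw [hTsplit]; linarith
          have hTge2 : ∑ j ∈ s, x * ‖a j‖^5 ≤ T := by rw [hTsplit]; linarith
          have hT0 : 0 ≤ T := by rw [hTsplit]; linarith
          have hc4 : (0:ℝ) ≤ (s.card : ℝ)^4 := by positivity
          nlinarith [mul_le_mul_of_nonneg_left hTge2 hc4]


variable {α : Type*} [MeasurableSpace α] {μ : MeasureTheory.Measure α}

lemma rpow6 (x : ℝ) : x ^ (6:ℝ) = x ^ (6:ℕ) := by
  rw [show (6:ℝ) = ((6:ℕ):ℝ) by norm_num, Real.rpow_natCast]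

lemma rpow3 (x : ℝ) : x ^ (3:ℝ) = x ^ (3:ℕ) := by
  rw [show (3:ℝ) = ((3:ℕ):ℝ) by norm_num, Real.rpow_natCast]

lemma int6 {f : α → ℂ} (hf : MemLp f 6 μ) : Integrable (fun x => ‖f x‖^(6:ℕ)) μ := by
  have h := hf.integrable_norm_rpow (by norm_num) (by norm_num)
  have h2 : (6:ℝ≥0∞).toReal = (6:ℝ) := by norm_num
  rw [h2] at h
  simpa [rpow6] using h

lemma memℒp_mul6 {f g : α → ℂ} (hf : MemLp f 6 μ) (hg : MemLp g 6 μ) :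
    MemLp (fun x => f x * g x) 3 μ := by
  have h := hf.smul (φ := g) (p := 6) (q := 6) (r := 3) hg
    (hpqr := ⟨by simp only [← one_div]; rw [ENNReal.div_add_div_same]; rw [ENNReal.div_eq_div_iff] <;> norm_num⟩)
  simpa [smul_eq_mul, mul_comm, Pi.mul_def] using h

lemma memℒp_npow_div {f : α → ℂ} (hf : MemLp f 6 μ) (n : ℕ) :
    MemLp (fun x => ‖f x‖ ^ (n:ℕ)) ((6:ℝ≥0∞) / n) μ := by
  have h := hf.norm_rpow_div (n : ℝ≥0∞)
  have ht : ((n:ℝ≥0∞)).toReal = (n:ℝ) := by simp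
  rw [ht] at h
  simpa [Real.rpow_natCast] using h

lemma holder_pair {f g : α → ℂ} (hf : MemLp f 6 μ) (hg : MemLp g 6 μ) :
    ∫ x, ‖f x‖ * ‖g x‖^(5:ℕ) ∂μ ≤
      (∫ x, ‖f x * g x‖^(3:ℕ) ∂μ) ^ ((1:ℝ)/3) * (∫ x, ‖g x‖^(6:ℕ) ∂μ) ^ ((2:ℝ)/3) := by
  have hFG : MemLp (fun x => f x * g x) (ENNReal.ofReal 3) μ := by
    rw [show ENNReal.ofReal 3 = 3 from ENNReal.ofReal_ofNat 3]; exact memℒp_mul6 hf hg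
  have hG4 : MemLp (fun x => ((‖g x‖ ^ (4:ℕ) : ℝ) : ℂ)) (ENNReal.ofReal (3/2)) μ := by
    rw [show ENNReal.ofReal (3/2) = (6:ℝ≥0∞)/4 by
      rw [ENNReal.ofReal_div_of_pos (by norm_num), ENNReal.ofReal_ofNat, ENNReal.ofReal_ofNat,
        ENNReal.div_eq_div_iff] <;> norm_num]
    exact (memℒp_npow_div hg 4).ofReal
  have H := MeasureTheory.integral_mul_norm_le_Lp_mul_Lq (μ := μ)
    (f := fun x => f x * g x) (g := fun x => ((‖g x‖ ^ (4:ℕ) : ℝ) : ℂ))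
    (p := 3) (q := 3/2) ⟨by norm_num, by norm_num, by norm_num⟩ hFG hG4
  simp only [Complex.norm_real, Real.norm_eq_abs, abs_of_nonneg (pow_nonneg (norm_nonneg _) _)] at H
  calc ∫ x, ‖f x‖ * ‖g x‖^(5:ℕ) ∂μ
      = ∫ x, ‖f x * g x‖ * ‖g x‖ ^ (4:ℕ) ∂μ := by
        congr 1; funext x; rw [norm_mul]; ring
    _ ≤ (∫ x, ‖f x * g x‖ ^ (3:ℝ) ∂μ) ^ ((1:ℝ)/3) * (∫ x, (‖g x‖^(4:ℕ)) ^ ((3:ℝ)/2) ∂μ) ^ (1/((3:ℝ)/2)) := H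
    _ = (∫ x, ‖f x * g x‖^(3:ℕ) ∂μ) ^ ((1:ℝ)/3) * (∫ x, ‖g x‖^(6:ℕ) ∂μ) ^ ((2:ℝ)/3) := by
        congr 1
        · congr 1; exact integral_congr_ae (Filter.Eventually.of_forall fun x => rpow3 _)
        · rw [show 1/((3:ℝ)/2) = (2:ℝ)/3 by norm_num]
          congr 1
          refine integral_congr_ae (Filter.Eventually.of_forall fun x => ?_)
          show (‖g x‖ ^ (4:ℕ)) ^ ((3:ℝ)/2) = ‖g x‖ ^ (6:ℕ)
          rw [← Real.rpow_natCast (‖g x‖) 4, ← Real.rpow_mul (norm_nonneg _)]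
          norm_num [rpow6]

lemma holder_rem {f g : α → ℂ} (hf : MemLp f 6 μ) (hg : MemLp g 6 μ) :
    ∫ x, ‖f x‖ * ‖g x‖^(5:ℕ) ∂μ ≤
      (∫ x, ‖f x‖^(6:ℕ) ∂μ) ^ ((1:ℝ)/6) * (∫ x, ‖g x‖^(6:ℕ) ∂μ) ^ ((5:ℝ)/6) := by
  have hF : MemLp f (ENNReal.ofReal 6) μ := by
    rw [show ENNReal.ofReal 6 = 6 from ENNReal.ofReal_ofNat 6]; exact hf
  have hG5 : MemLp (fun x => ((‖g x‖ ^ (5:ℕ) : ℝ) : ℂ)) (ENNReal.ofReal (6/5)) μ := by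
    rw [show ENNReal.ofReal (6/5) = (6:ℝ≥0∞)/5 by
      rw [ENNReal.ofReal_div_of_pos (by norm_num), ENNReal.ofReal_ofNat, ENNReal.ofReal_ofNat]]
    exact (memℒp_npow_div hg 5).ofReal
  have H := MeasureTheory.integral_mul_norm_le_Lp_mul_Lq (μ := μ)
    (f := f) (g := fun x => ((‖g x‖ ^ (5:ℕ) : ℝ) : ℂ))
    (p := 6) (q := 6/5) ⟨by norm_num, by norm_num, by norm_num⟩ hF hG5
  simp only [Complex.norm_real, Real.norm_eq_abs, abs_of_nonneg (pow_nonneg (norm_nonneg _) _)] at H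
  calc ∫ x, ‖f x‖ * ‖g x‖^(5:ℕ) ∂μ
      ≤ (∫ x, ‖f x‖ ^ (6:ℝ) ∂μ) ^ ((1:ℝ)/6) * (∫ x, (‖g x‖^(5:ℕ)) ^ ((6:ℝ)/5) ∂μ) ^ (1/((6:ℝ)/5)) := H
    _ = (∫ x, ‖f x‖^(6:ℕ) ∂μ) ^ ((1:ℝ)/6) * (∫ x, ‖g x‖^(6:ℕ) ∂μ) ^ ((5:ℝ)/6) := by
        congr 1
        · congr 1; exact integral_congr_ae (Filter.Eventually.of_forall fun x => rpow6 _)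
        · rw [show 1/((6:ℝ)/5) = (5:ℝ)/6 by norm_num]
          congr 1
          refine integral_congr_ae (Filter.Eventually.of_forall fun x => ?_)
          show (‖g x‖ ^ (5:ℕ)) ^ ((6:ℝ)/5) = ‖g x‖ ^ (6:ℕ)
          rw [← Real.rpow_natCast (‖g x‖) 5, ← Real.rpow_mul (norm_nonneg _)]
          norm_num [rpow6]

lemma integrable_pair {f g : α → ℂ} (hf : MemLp f 6 μ) (hg : MemLp g 6 μ) :
    Integrable (fun x => ‖f x‖ * ‖g x‖^(5:ℕ)) μ := by
  have hf' : MemLp (fun x => ‖f x‖) (6:ℝ≥0∞) μ := hf.norm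
  have hg5 : MemLp (fun x => ‖g x‖ ^ (5:ℕ)) ((6:ℝ≥0∞)/5) μ := memℒp_npow_div hg 5
  have hexp : (1:ℝ≥0∞)/1 = 1/((6:ℝ≥0∞)/5) + 1/6 := by
    rw [one_div_one, one_div, ENNReal.inv_div (a := 6) (b := 5) (Or.inl (by norm_num)) (Or.inl (by norm_num)),
      ENNReal.div_add_div_same]
    rw [show (5:ℝ≥0∞)+1 = 6 by norm_num]
    exact (ENNReal.div_self (a := 6) (by norm_num) (by norm_num)).symm
  have h := MemLp.smul (φ := fun x => ‖g x‖ ^ (5:ℕ)) (f := fun x => ‖f x‖)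
    (p := (6:ℝ≥0∞)/5) (q := 6) (r := 1) hf' hg5 (hpqr := ⟨by simpa only [one_div] using hexp.symm⟩)
  rw [← memLp_one_iff_integrable]
  simpa [smul_eq_mul, mul_comm, Pi.mul_def] using h

lemma abs_int_le {u : α → ℝ} : |∫ x, u x ∂μ| ≤ ∫ x, |u x| ∂μ := by
  rw [← Real.norm_eq_abs]
  exact (norm_integral_le_integral_norm u).trans_eq (by simp [Real.norm_eq_abs])

theorem key (μ : Measure α) (J : ℕ)
    (F : Fin J → ℕ → α → ℂ) (r fs : ℕ → α → ℂ)
    (hmem : ∀ j k, MemLp (F j k) 6 μ) (hmemr : ∀ k, MemLp (r k) 6 μ)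
    (hsum : ∀ k x, fs k x = (∑ j, F j k x) + r k x)
    (hb : ∀ j j' : Fin J, j ≠ j' →
      Tendsto (fun k => ∫ x, ‖F j k x * F j' k x‖^(3:ℕ) ∂μ) atTop (nhds 0))
    (hc : ∃ M, ∀ j k, (∫ x, ‖F j k x‖^(6:ℕ) ∂μ) ≤ M)
    (hd : Tendsto (fun k => ∫ x, ‖r k x‖^(6:ℕ) ∂μ) atTop (nhds 0)) :
    Tendsto (fun k => (∫ x, ‖fs k x‖^(6:ℕ) ∂μ)
      - (∑ j, ∫ x, ‖F j k x‖^(6:ℕ) ∂μ) - ∫ x, ‖r k x‖^(6:ℕ) ∂μ) atTop (nhds 0) := by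
  obtain ⟨M, hM⟩ := hc
  set M' : ℝ := max M 0 with hM'def
  have hM'0 : 0 ≤ M' := le_max_right _ _
  have hM' : ∀ j k, (∫ x, ‖F j k x‖^(6:ℕ) ∂μ) ≤ M' := fun j k => (hM j k).trans (le_max_left _ _)
  obtain ⟨C, hC0, hCptw⟩ := multi (Finset.univ : Finset (Fin J))
  set g : ℕ → α → ℂ := fun k x => ∑ j, F j k x with hgdef
  have hmemg : ∀ k, MemLp (g k) 6 μ := fun k => memLp_finset_sum _ (fun j _ => hmem j k)
  have hmemf : ∀ k, MemLp (fs k) 6 μ := fun k => by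
    have : fs k = fun x => g k x + r k x := funext (hsum k)
    rw [this]; exact (hmemg k).add (hmemr k)
  -- nonnegativity of the basic integrals
  have hA0 : ∀ j k, 0 ≤ ∫ x, ‖F j k x‖^(6:ℕ) ∂μ :=
    fun j k => integral_nonneg (fun x => by positivity)
  have hR0 : ∀ k, 0 ≤ ∫ x, ‖r k x‖^(6:ℕ) ∂μ :=
    fun k => integral_nonneg (fun x => by positivity)
  have hG0 : ∀ k, 0 ≤ ∫ x, ‖g k x‖^(6:ℕ) ∂μ :=
    fun k => integral_nonneg (fun x => by positivity)
  have hP0 : ∀ (j j' : Fin J) k, 0 ≤ ∫ x, ‖F j k x * F j' k x‖^(3:ℕ) ∂μ :=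
    fun j j' k => integral_nonneg (fun x => by positivity)
  -- the quantity Q
  set Q : ℕ → ℝ := fun k => ∑ j : Fin J, ∑ j' ∈ Finset.univ.erase j,
      (∫ x, ‖F j k x * F j' k x‖^(3:ℕ) ∂μ) ^ ((1:ℝ)/3) * M' ^ ((2:ℝ)/3) with hQdef
  have hQ0 : ∀ k, 0 ≤ Q k := fun k =>
    Finset.sum_nonneg fun j _ => Finset.sum_nonneg fun j' _ =>
      mul_nonneg (Real.rpow_nonneg (hP0 j j' k) _) (Real.rpow_nonneg hM'0 _)
  have hQtendsto : Tendsto Q atTop (nhds 0) := by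
    have : Tendsto Q atTop (nhds (∑ j : Fin J, ∑ j' ∈ Finset.univ.erase j, (0:ℝ))) := by
      apply tendsto_finset_sum
      intro j _
      apply tendsto_finset_sum
      intro j' hj'
      have hne : j ≠ j' := (Finset.ne_of_mem_erase hj').symm
      have h1 := (hb j j' hne).rpow_const (Or.inr (by norm_num : (0:ℝ) ≤ 1/3))
      rw [Real.zero_rpow (by norm_num : (1:ℝ)/3 ≠ 0)] at h1
      simpa using h1.mul_const (M' ^ ((2:ℝ)/3))
    simpa using this
  -- pair bound
  have pairB : ∀ (j j' : Fin J) (k : ℕ), ∫ x, ‖F j k x‖ * ‖F j' k x‖^(5:ℕ) ∂μ ≤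
      (∫ x, ‖F j k x * F j' k x‖^(3:ℕ) ∂μ) ^ ((1:ℝ)/3) * M' ^ ((2:ℝ)/3) := by
    intro j j' k
    refine (holder_pair (hmem j k) (hmem j' k)).trans ?_
    exact mul_le_mul_of_nonneg_left
      (Real.rpow_le_rpow (hA0 j' k) (hM' j' k) (by norm_num))
      (Real.rpow_nonneg (hP0 j j' k) _)
  -- step (ii)
  have hii : ∀ k, |(∫ x, ‖g k x‖^(6:ℕ) ∂μ) - ∑ j, ∫ x, ‖F j k x‖^(6:ℕ) ∂μ| ≤ C * Q k := by
    intro k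
    have hintF : ∀ j : Fin J, Integrable (fun x => ‖F j k x‖^(6:ℕ)) μ := fun j => int6 (hmem j k)
    have hintg : Integrable (fun x => ‖g k x‖^(6:ℕ)) μ := int6 (hmemg k)
    have hintpair : ∀ (j j' : Fin J), Integrable (fun x => ‖F j k x‖ * ‖F j' k x‖^(5:ℕ)) μ :=
      fun j j' => integrable_pair (hmem j k) (hmem j' k)
    have hintpairsum : Integrable (fun x => C * ∑ j : Fin J, ∑ j' ∈ Finset.univ.erase j,
        ‖F j k x‖ * ‖F j' k x‖^(5:ℕ)) μ := by
      apply Integrable.const_mul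
      apply integrable_finset_sum
      intro j _
      exact integrable_finset_sum _ (fun j' _ => hintpair j j')
    have e1 : (∫ x, ‖g k x‖^(6:ℕ) ∂μ) - ∑ j, ∫ x, ‖F j k x‖^(6:ℕ) ∂μ
        = ∫ x, (‖g k x‖^(6:ℕ) - ∑ j, ‖F j k x‖^(6:ℕ)) ∂μ := by
      rw [integral_sub hintg (integrable_finset_sum _ (fun j _ => hintF j)),
        integral_finset_sum _ (fun j _ => hintF j)]
    rw [e1]
    calc |∫ x, (‖g k x‖^(6:ℕ) - ∑ j, ‖F j k x‖^(6:ℕ)) ∂μ|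
        ≤ ∫ x, |‖g k x‖^(6:ℕ) - ∑ j, ‖F j k x‖^(6:ℕ)| ∂μ := abs_int_le
      _ ≤ ∫ x, C * ∑ j : Fin J, ∑ j' ∈ Finset.univ.erase j,
            ‖F j k x‖ * ‖F j' k x‖^(5:ℕ) ∂μ := by
          apply integral_mono
            ((hintg.sub (integrable_finset_sum _ (fun j _ => hintF j))).abs) hintpairsum
          intro x
          exact hCptw (fun j => F j k x)
      _ = C * ∑ j : Fin J, ∑ j' ∈ Finset.univ.erase j,
            ∫ x, ‖F j k x‖ * ‖F j' k x‖^(5:ℕ) ∂μ := by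
          rw [integral_const_mul]
          congr 1
          rw [integral_finset_sum _ (fun j _ => integrable_finset_sum _ (fun j' _ => hintpair j j'))]
          exact Finset.sum_congr rfl fun j _ =>
            integral_finset_sum _ (fun j' _ => hintpair j j')
      _ ≤ C * Q k := by
          apply mul_le_mul_of_nonneg_left _ hC0
          apply Finset.sum_le_sum
          intro j _
          exact Finset.sum_le_sum fun j' _ => pairB j j' k
  -- bound on G
  have hGb : ∀ k, (∫ x, ‖g k x‖^(6:ℕ) ∂μ) ≤ J * M' + C * Q k := by
    intro k
    have h := (abs_le.mp (hii k)).2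
    have hAs : (∑ j, ∫ x, ‖F j k x‖^(6:ℕ) ∂μ) ≤ J * M' := by
      calc (∑ j, ∫ x, ‖F j k x‖^(6:ℕ) ∂μ) ≤ ∑ _j : Fin J, M' :=
            Finset.sum_le_sum (fun j _ => hM' j k)
        _ = J * M' := by simp [Finset.sum_const, mul_comm]
    linarith
  -- step (i)
  have hi : ∀ k, |(∫ x, ‖fs k x‖^(6:ℕ) ∂μ) - (∫ x, ‖g k x‖^(6:ℕ) ∂μ) - ∫ x, ‖r k x‖^(6:ℕ) ∂μ|
      ≤ 62 * ((∫ x, ‖r k x‖^(6:ℕ) ∂μ) ^ ((1:ℝ)/6) * (∫ x, ‖g k x‖^(6:ℕ) ∂μ) ^ ((5:ℝ)/6)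
        + (∫ x, ‖g k x‖^(6:ℕ) ∂μ) ^ ((1:ℝ)/6) * (∫ x, ‖r k x‖^(6:ℕ) ∂μ) ^ ((5:ℝ)/6)) := by
    intro k
    have hintf : Integrable (fun x => ‖fs k x‖^(6:ℕ)) μ := int6 (hmemf k)
    have hintg : Integrable (fun x => ‖g k x‖^(6:ℕ)) μ := int6 (hmemg k)
    have hintr : Integrable (fun x => ‖r k x‖^(6:ℕ)) μ := int6 (hmemr k)
    have hint1 : Integrable (fun x => ‖r k x‖ * ‖g k x‖^(5:ℕ)) μ :=
      integrable_pair (hmemr k) (hmemg k)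
    have hint2 : Integrable (fun x => ‖g k x‖ * ‖r k x‖^(5:ℕ)) μ :=
      integrable_pair (hmemg k) (hmemr k)
    have e1 : (∫ x, ‖fs k x‖^(6:ℕ) ∂μ) - (∫ x, ‖g k x‖^(6:ℕ) ∂μ) - ∫ x, ‖r k x‖^(6:ℕ) ∂μ
        = ∫ x, (‖fs k x‖^(6:ℕ) - ‖g k x‖^(6:ℕ) - ‖r k x‖^(6:ℕ)) ∂μ := by
      have i1 : Integrable (fun x => ‖fs k x‖^(6:ℕ) - ‖g k x‖^(6:ℕ)) μ := hintf.sub hintg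
      rw [integral_sub i1 hintr, integral_sub hintf hintg]
    rw [e1]
    calc |∫ x, (‖fs k x‖^(6:ℕ) - ‖g k x‖^(6:ℕ) - ‖r k x‖^(6:ℕ)) ∂μ|
        ≤ ∫ x, |‖fs k x‖^(6:ℕ) - ‖g k x‖^(6:ℕ) - ‖r k x‖^(6:ℕ)| ∂μ := abs_int_le
      _ ≤ ∫ x, 62 * (‖r k x‖ * ‖g k x‖^(5:ℕ) + ‖g k x‖ * ‖r k x‖^(5:ℕ)) ∂μ := by
          apply integral_mono ((hintf.sub hintg).sub hintr).abs
            ((hint1.add hint2).const_mul 62)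
          intro x
          have h := cplx2 (g k x) (r k x)
          rw [← hsum k x] at h
          calc |‖fs k x‖^(6:ℕ) - ‖g k x‖^(6:ℕ) - ‖r k x‖^(6:ℕ)|
              ≤ 62*(‖g k x‖^(5:ℕ)*‖r k x‖ + ‖g k x‖*‖r k x‖^(5:ℕ)) := h
            _ = 62 * (‖r k x‖ * ‖g k x‖^(5:ℕ) + ‖g k x‖ * ‖r k x‖^(5:ℕ)) := by ring
      _ = 62 * ((∫ x, ‖r k x‖ * ‖g k x‖^(5:ℕ) ∂μ) + ∫ x, ‖g k x‖ * ‖r k x‖^(5:ℕ) ∂μ) := by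
          rw [integral_const_mul, integral_add hint1 hint2]
      _ ≤ 62 * ((∫ x, ‖r k x‖^(6:ℕ) ∂μ) ^ ((1:ℝ)/6) * (∫ x, ‖g k x‖^(6:ℕ) ∂μ) ^ ((5:ℝ)/6)
          + (∫ x, ‖g k x‖^(6:ℕ) ∂μ) ^ ((1:ℝ)/6) * (∫ x, ‖r k x‖^(6:ℕ) ∂μ) ^ ((5:ℝ)/6)) := by
          apply mul_le_mul_of_nonneg_left _ (by norm_num)
          exact add_le_add (holder_rem (hmemr k) (hmemg k)) (holder_rem (hmemg k) (hmemr k))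
  -- the explicit vanishing bound
  set B : ℕ → ℝ := fun k =>
    62 * ((∫ x, ‖r k x‖^(6:ℕ) ∂μ) ^ ((1:ℝ)/6) * (J * M' + C * Q k) ^ ((5:ℝ)/6)
      + (J * M' + C * Q k) ^ ((1:ℝ)/6) * (∫ x, ‖r k x‖^(6:ℕ) ∂μ) ^ ((5:ℝ)/6)) + C * Q k
    with hBdef
  have hbig : ∀ k, |(∫ x, ‖fs k x‖^(6:ℕ) ∂μ)
      - (∑ j, ∫ x, ‖F j k x‖^(6:ℕ) ∂μ) - ∫ x, ‖r k x‖^(6:ℕ) ∂μ| ≤ B k := by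
    intro k
    have split : (∫ x, ‖fs k x‖^(6:ℕ) ∂μ)
        - (∑ j, ∫ x, ‖F j k x‖^(6:ℕ) ∂μ) - ∫ x, ‖r k x‖^(6:ℕ) ∂μ
        = ((∫ x, ‖fs k x‖^(6:ℕ) ∂μ) - (∫ x, ‖g k x‖^(6:ℕ) ∂μ) - ∫ x, ‖r k x‖^(6:ℕ) ∂μ)
          + ((∫ x, ‖g k x‖^(6:ℕ) ∂μ) - ∑ j, ∫ x, ‖F j k x‖^(6:ℕ) ∂μ) := by ring
    rw [split]
    have hGB : (0:ℝ) ≤ J * M' + C * Q k := by positivity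
    have h56 : (∫ x, ‖g k x‖^(6:ℕ) ∂μ) ^ ((5:ℝ)/6) ≤ (J * M' + C * Q k) ^ ((5:ℝ)/6) :=
      Real.rpow_le_rpow (hG0 k) (hGb k) (by norm_num)
    have h16 : (∫ x, ‖g k x‖^(6:ℕ) ∂μ) ^ ((1:ℝ)/6) ≤ (J * M' + C * Q k) ^ ((1:ℝ)/6) :=
      Real.rpow_le_rpow (hG0 k) (hGb k) (by norm_num)
    calc |_ + _| ≤ _ := abs_add_le _ _
      _ ≤ B k := by
        refine add_le_add ((hi k).trans ?_) (hii k)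
        apply mul_le_mul_of_nonneg_left _ (by norm_num : (0:ℝ) ≤ 62)
        refine add_le_add ?_ ?_
        · exact mul_le_mul_of_nonneg_left h56 (Real.rpow_nonneg (hR0 k) _)
        · exact mul_le_mul_of_nonneg_right h16 (Real.rpow_nonneg (hR0 k) _)
  -- B tends to 0
  have hBtendsto : Tendsto B atTop (nhds 0) := by
    have hJM : Tendsto (fun k => J * M' + C * Q k) atTop (nhds (J * M')) := by
      have := (hQtendsto.const_mul C).const_add ((J:ℝ) * M')
      simpa only [mul_zero, add_zero] using this
    have hR16 : Tendsto (fun k => (∫ x, ‖r k x‖^(6:ℕ) ∂μ) ^ ((1:ℝ)/6)) atTop (nhds 0) := by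
      have := hd.rpow_const (Or.inr (by norm_num : (0:ℝ) ≤ 1/6))
      rwa [Real.zero_rpow (by norm_num : (1:ℝ)/6 ≠ 0)] at this
    have hR56 : Tendsto (fun k => (∫ x, ‖r k x‖^(6:ℕ) ∂μ) ^ ((5:ℝ)/6)) atTop (nhds 0) := by
      have := hd.rpow_const (Or.inr (by norm_num : (0:ℝ) ≤ 5/6))
      rwa [Real.zero_rpow (by norm_num : (5:ℝ)/6 ≠ 0)] at this
    have hJM56 : Tendsto (fun k => (J * M' + C * Q k) ^ ((5:ℝ)/6)) atTop
        (nhds ((J * M') ^ ((5:ℝ)/6))) := hJM.rpow_const (Or.inr (by norm_num))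
    have hJM16 : Tendsto (fun k => (J * M' + C * Q k) ^ ((1:ℝ)/6)) atTop
        (nhds ((J * M') ^ ((1:ℝ)/6))) := hJM.rpow_const (Or.inr (by norm_num))
    have := (((hR16.mul hJM56).add (hJM16.mul hR56)).const_mul 62).add (hQtendsto.const_mul C)
    simpa only [zero_mul, mul_zero, add_zero, zero_add] using this
  -- squeeze
  have hlb : ∀ k, -B k ≤ (∫ x, ‖fs k x‖^(6:ℕ) ∂μ)
      - (∑ j, ∫ x, ‖F j k x‖^(6:ℕ) ∂μ) - ∫ x, ‖r k x‖^(6:ℕ) ∂μ :=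
    fun k => (abs_le.mp (hbig k)).1
  have hub : ∀ k, (∫ x, ‖fs k x‖^(6:ℕ) ∂μ)
      - (∑ j, ∫ x, ‖F j k x‖^(6:ℕ) ∂μ) - ∫ x, ‖r k x‖^(6:ℕ) ∂μ ≤ B k :=
    fun k => (abs_le.mp (hbig k)).2
  have hnegB : Tendsto (fun k => -B k) atTop (nhds 0) := by
    simpa using hBtendsto.neg
  exact tendsto_of_tendsto_of_tendsto_of_le_of_le hnegB hBtendsto hlb hub


end Aux

/-- Decoupling of the energy `E¹(u) = ½∫|∇_g u|² + (1/6)∫|u|⁶` along a profile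
decomposition `f_k = Σ_{α≤J} F^α_k + r^J_k` on `H³`.  The gradient parts are recorded
by the numbers `Gf k = ‖∇_g f_k‖²_{L²}`, `GF α k = ‖∇_g F^α_k‖²_{L²}`,
`Gr k = ‖∇_g r^J_k‖²_{L²}`, which satisfy the Pythagorean hypothesis (a); (b) the
profiles pairwise decouple in `L³`; (c) they are uniformly bounded in `L⁶`; (d) the
remainder vanishes in `L⁶`.  Then `|E¹(f_k) - Σ_α E¹(F^α_k) - E¹(r^J_k)| → 0`. -/
theorem stmt16 [MetricSpace Hyp3] [MeasurableSpace Hyp3] [BorelSpace Hyp3]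
    (hdist : ∀ x y : Hyp3, dist x y = _root_.arcosh (Mink x.1 y.1))
    (J : ℕ) (F : Fin J → ℕ → Hyp3 → ℂ) (r fseq : ℕ → Hyp3 → ℂ)
    (Gf Gr : ℕ → ℝ) (GF : Fin J → ℕ → ℝ)
    (hGf : ∀ k, 0 ≤ Gf k) (hGF : ∀ j k, 0 ≤ GF j k) (hGr : ∀ k, 0 ≤ Gr k)
    (hsum : ∀ k x, fseq k x = (∑ j : Fin J, F j k x) + r k x)
    (hmem : ∀ j k, MeasureTheory.MemLp (F j k) 6 (μH[3] : Measure Hyp3))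
    (hmemr : ∀ k, MeasureTheory.MemLp (r k) 6 (μH[3] : Measure Hyp3))
    (ha : Filter.Tendsto (fun k => Gf k - (∑ j : Fin J, GF j k) - Gr k)
      Filter.atTop (nhds 0))
    (hb : ∀ j j' : Fin J, j ≠ j' →
      Filter.Tendsto (fun k => ∫ x, ‖F j k x * F j' k x‖ ^ 3 ∂(μH[3] : Measure Hyp3))
        Filter.atTop (nhds 0))
    (hc : ∃ M : ℝ, ∀ j k, ∫ x, ‖F j k x‖ ^ 6 ∂(μH[3] : Measure Hyp3) ≤ M)
    (hd : Filter.Tendsto (fun k => ∫ x, ‖r k x‖ ^ 6 ∂(μH[3] : Measure Hyp3))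
      Filter.atTop (nhds 0)) :
    Filter.Tendsto
      (fun k =>
        |((1 / 2 : ℝ) * Gf k + (1 / 6) * ∫ x, ‖fseq k x‖ ^ 6 ∂(μH[3] : Measure Hyp3))
          - (∑ j : Fin J,
              ((1 / 2 : ℝ) * GF j k + (1 / 6) * ∫ x, ‖F j k x‖ ^ 6 ∂(μH[3] : Measure Hyp3)))
          - ((1 / 2 : ℝ) * Gr k + (1 / 6) * ∫ x, ‖r k x‖ ^ 6 ∂(μH[3] : Measure Hyp3))|)
      Filter.atTop (nhds 0) := by
  have key' := key (μH[3] : Measure Hyp3) J F r fseq hmem hmemr hsum hb hc hd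
  have hmain : Tendsto (fun k => (1/2:ℝ) * (Gf k - (∑ j : Fin J, GF j k) - Gr k)
      + (1/6:ℝ) * ((∫ x, ‖fseq k x‖ ^ 6 ∂(μH[3] : Measure Hyp3))
        - (∑ j : Fin J, ∫ x, ‖F j k x‖ ^ 6 ∂(μH[3] : Measure Hyp3))
        - ∫ x, ‖r k x‖ ^ 6 ∂(μH[3] : Measure Hyp3))) atTop (nhds 0) := by
    have := (ha.const_mul (1/2:ℝ)).add (key'.const_mul (1/6:ℝ))
    simpa only [mul_zero, add_zero] using this
  have habs := hmain.abs
  rw [abs_zero] at habs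
  refine habs.congr fun k => ?_
  congr 1
  rw [Finset.sum_add_distrib, ← Finset.mul_sum, ← Finset.mul_sum]
  ring

end
end
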